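/- The expected type of a random realization equals the maximum acceptance probability: E[y(ĝ)] = f(V) = p_max, i.e., the probability that a random realization ĝ is type-1 equals the acceptance probability f(V) of inviting all users, which equals the maximum of f(I) over all invitation sets I ⊆ V. -/

import Mathlib

open Finset MeasureTheory

/-- A social network with weights, an initiator `s`, and a target user `t ∉ N_s`. -/
structure FriendNet (V : Type) [Fintype V] [DecidableEq V] where
  G : SimpleGraph V
  adjDec : DecidableRel G.Adj
  w : V → V → ℝ
  w_pos : ∀ u v : V, G.Adj u v → 0 < w u v
  w_le_one : ∀ u v : V, G.Adj u v → w u v ≤ 1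
  w_eq_zero : ∀ u v : V, ¬ G.Adj u v → w u v = 0
  w_sum_le_one : ∀ v : V, ∑ u : V, w u v ≤ 1
  s : V
  t : V
  t_ne_s : t ≠ s
  t_not_friend : ¬ G.Adj s t

variable {V : Type} [Fintype V] [DecidableEq V]

namespace FriendNet

/-- The current friends (neighbors) `N_v` of a user `v`. -/
def Nbr (net : FriendNet V) (v : V) : Finset V :=
  letI := net.adjDec
  Finset.univ.filter fun u => net.G.Adj u v

/-- `Φ(C)`: users not in `C` willing to accept an invitation, given thresholds `θ`. -/
noncomputable def Phi (net : FriendNet V) (θ : V → ℝ) (C : Finset V) : Finset V :=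
  Finset.univ.filter fun u => u ∉ C ∧ θ u ≤ ∑ v ∈ C, net.w v u

/-- One round of the friending process: `C ∪ (Φ(C) ∩ I)`. -/
noncomputable def Cstep (net : FriendNet V) (θ : V → ℝ) (I : Finset V) (C : Finset V) : Finset V :=
  C ∪ (net.Phi θ C ∩ I)

/-- `C_∞(I)`: the final set of the threshold friending process (it stabilizes after
`|V|` rounds). -/
noncomputable def Cinf (net : FriendNet V) (θ : V → ℝ) (I : Finset V) : Finset V :=
  (net.Cstep θ I)^[Fintype.card V] (net.Nbr net.s)

/-- The distribution of the thresholds: i.i.d. uniform on `[0,1]`. -/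
noncomputable def thetaMeasure (V : Type) [Fintype V] : Measure (V → ℝ) :=
  Measure.pi fun _ => volume.restrict (Set.Icc (0 : ℝ) 1)

/-- The acceptance probability `f(I)`: probability over the thresholds that `t ∈ C_∞(I)`. -/
noncomputable def f (net : FriendNet V) (I : Finset V) : ℝ :=
  (thetaMeasure V {θ : V → ℝ | net.t ∈ net.Cinf θ I}).toReal

/-- `p_max`: the maximum acceptance probability over all invitation sets. -/
noncomputable def pmax (net : FriendNet V) : ℝ := ⨆ I : Finset V, net.f I

/-- A realization: each user selects at most one current friend (`none` plays ℵ0). -/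
def IsRealization (net : FriendNet V) (g : V → Option V) : Prop :=
  ∀ v u : V, g v = some u → net.G.Adj u v

/-- `Pr[g]`, the probability of generating the realization `g`. -/
noncomputable def realWeight (net : FriendNet V) (g : V → Option V) : ℝ :=
  ∏ v : V, (g v).elim (1 - ∑ u : V, net.w u v) (fun u => net.w u v)

/-- `Ψ(H)` for a realization `g`. -/
def Psi (g : V → Option V) (H : Finset V) : Finset V :=
  Finset.univ.filter fun v => v ∉ H ∧ ∃ u ∈ H, g v = some u

/-- One round of Process 2: `H ∪ (Ψ(H) ∩ I)`. -/
def Hstep (g : V → Option V) (I : Finset V) (H : Finset V) : Finset V :=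
  H ∪ (Psi g H ∩ I)

/-- `H_∞(g, I)`: the final set of Process 2 (it stabilizes after `|V|` rounds). -/
def Hinf (net : FriendNet V) (g : V → Option V) (I : Finset V) : Finset V :=
  (Hstep g I)^[Fintype.card V] (net.Nbr net.s)

end FriendNet

/-- The loop of Algorithm 1 (backward trace), with fuel. `none` plays ℵ0. -/
def traceAux (g : V → Option V) (Ns : Finset V) : ℕ → V → Finset (Option V) → Finset (Option V)
  | 0, _, acc => acc
  | m + 1, u, acc =>
    match g u with
    | none => insert none acc
    | some v =>
      if some v ∈ acc then insert none acc
      else if v ∈ Ns then acc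
      else traceAux g Ns m v (insert (some v) acc)

namespace FriendNet

/-- The backward trace `t(g)` computed by Algorithm 1. -/
def trace (net : FriendNet V) (g : V → Option V) : Finset (Option V) :=
  traceAux g (net.Nbr net.s) (Fintype.card V + 1) net.t {some net.t}

/-- `f(g, I)`: the indicator that `I` covers `g`, i.e. `t(g) ⊆ I`. -/
noncomputable def fg (net : FriendNet V) (g : V → Option V) (I : Finset V) : ℝ :=
  if net.trace g ⊆ I.image some then 1 else 0

/-- `F(B_l, I) = Σ_{g ∈ B_l} f(g, I)`. -/
noncomputable def F (net : FriendNet V) {l : ℕ} (B : Fin l → V → Option V)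
    (I : Finset V) : ℝ :=
  ∑ i : Fin l, net.fg (B i) I

end FriendNet

instance : MeasurableSpace (V → Option V) := ⊤

/-- The distribution of a random realization `ĝ`. -/
noncomputable def FriendNet.realMeasure (net : FriendNet V) : Measure (V → Option V) :=
  ∑ g : V → Option V, ENNReal.ofReal (net.realWeight g) • Measure.dirac g

open Classical in
/-- `V_max`: users outside `{s} ∪ N_s` lying on some path from `{s} ∪ N_s` to `t`. -/
noncomputable def FriendNet.Vmax (net : FriendNet V) : Finset V :=
  Finset.univ.filter fun u =>
    u ∉ insert net.s (net.Nbr net.s) ∧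
      ∃ v ∈ insert net.s (net.Nbr net.s),
        ∃ p : net.G.Walk v net.t, p.IsPath ∧ u ∈ p.support

namespace FriendNet

variable (net : FriendNet V)

lemma w_nonneg (u v : V) : 0 ≤ net.w u v := by
  by_cases h : net.G.Adj u v
  · exact (net.w_pos u v h).le
  · rw [net.w_eq_zero u v h]

lemma sum_w_nonneg {C : Finset V} (v : V) : 0 ≤ ∑ u ∈ C, net.w u v :=
  Finset.sum_nonneg fun u _ => net.w_nonneg u v

lemma sum_w_le_one {C : Finset V} (v : V) : ∑ u ∈ C, net.w u v ≤ 1 :=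
  le_trans (Finset.sum_le_sum_of_subset_of_nonneg (Finset.subset_univ C)
    (fun u _ _ => net.w_nonneg u v)) (net.w_sum_le_one v)

lemma sum_w_mono {C C' : Finset V} (h : C ⊆ C') (v : V) :
    ∑ u ∈ C, net.w u v ≤ ∑ u ∈ C', net.w u v :=
  Finset.sum_le_sum_of_subset_of_nonneg h fun u _ _ => net.w_nonneg u v

lemma mem_Nbr {u v : V} : u ∈ net.Nbr v ↔ net.G.Adj u v := by
  letI := net.adjDec
  simp [Nbr]

lemma t_not_mem_Nbr : net.t ∉ net.Nbr net.s := by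
  rw [net.mem_Nbr]
  exact fun h => net.t_not_friend h.symm

lemma mem_Cstep_iff {θ : V → ℝ} {I C : Finset V} {u : V} :
    u ∈ net.Cstep θ I C ↔ u ∈ C ∨ (u ∉ C ∧ θ u ≤ ∑ v ∈ C, net.w v u ∧ u ∈ I) := by
  simp [Cstep, Phi, and_assoc]

lemma subset_Cstep (θ : V → ℝ) (I C : Finset V) : C ⊆ net.Cstep θ I C :=
  Finset.subset_union_left

lemma Cstep_mono {θ : V → ℝ} {I I' C C' : Finset V} (hI : I ⊆ I') (hC : C ⊆ C') :
    net.Cstep θ I C ⊆ net.Cstep θ I' C' := by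
  intro u hu
  rw [net.mem_Cstep_iff] at hu ⊢
  rcases hu with h | ⟨h1, h2, h3⟩
  · exact Or.inl (hC h)
  · by_cases hc : u ∈ C'
    · exact Or.inl hc
    · exact Or.inr ⟨hc, le_trans h2 (net.sum_w_mono hC u), hI h3⟩

lemma iterate_eventually_fixed {h : Finset V → Finset V} (hext : ∀ C, C ⊆ h C) (C₀ : Finset V) :
    h (h^[Fintype.card V] C₀) = h^[Fintype.card V] C₀ := by
  set n := Fintype.card V with hn
  by_contra hne
  have stable : ∀ i j, h^[i] C₀ = h^[i + 1] C₀ → h^[i + j] C₀ = h^[i] C₀ := by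
    intro i j hij
    induction j with
    | zero => rfl
    | succ j IH =>
      have : i + (j + 1) = (i + j) + 1 := by ring
      rw [this, Function.iterate_succ_apply', IH, ← Function.iterate_succ_apply' h i C₀, ← hij]
  have strict : ∀ i, i ≤ n → h^[i] C₀ ≠ h^[i + 1] C₀ := by
    intro i hi hij
    apply hne
    have h1 : h^[i + (n - i)] C₀ = h^[i] C₀ := stable i (n - i) hij
    have h2 : h^[i + (n - i + 1)] C₀ = h^[i] C₀ := stable i (n - i + 1) hij
    have hni : i + (n - i) = n := by omega
    rw [hni] at h1
    have hni2 : i + (n - i + 1) = n + 1 := by omega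
    rw [hni2, Function.iterate_succ_apply'] at h2
    rw [h2, h1]
  have card_ge : ∀ i, i ≤ n + 1 → i ≤ (h^[i] C₀).card := by
    intro i hi
    induction i with
    | zero => exact Nat.zero_le _
    | succ i IH =>
      have hss : h^[i] C₀ ⊂ h^[i + 1] C₀ := by
        refine HasSubset.Subset.ssubset_of_ne ?_ (strict i (by omega))
        rw [Function.iterate_succ_apply']
        exact hext _
      have := Finset.card_lt_card hss
      have := IH (by omega)
      omega
  have := card_ge (n + 1) le_rfl
  have hle : (h^[n + 1] C₀).card ≤ n := by
    rw [hn]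
    exact Finset.card_le_univ _
  omega

lemma Cstep_Cinf (θ : V → ℝ) (I : Finset V) :
    net.Cstep θ I (net.Cinf θ I) = net.Cinf θ I :=
  iterate_eventually_fixed (net.subset_Cstep θ I) _

lemma Nbr_subset_Cinf (θ : V → ℝ) (I : Finset V) : net.Nbr net.s ⊆ net.Cinf θ I := by
  unfold Cinf
  generalize Fintype.card V = n
  induction n with
  | zero => exact Finset.Subset.refl _
  | succ n IH =>
    rw [Function.iterate_succ_apply']
    exact subset_trans IH (net.subset_Cstep θ I _)

lemma Cinf_subset_union (θ : V → ℝ) (I : Finset V) :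
    net.Cinf θ I ⊆ net.Nbr net.s ∪ I := by
  unfold Cinf
  generalize Fintype.card V = n
  induction n with
  | zero => exact Finset.subset_union_left
  | succ n IH =>
    rw [Function.iterate_succ_apply']
    intro u hu
    rw [net.mem_Cstep_iff] at hu
    rcases hu with h | ⟨_, _, h3⟩
    · exact IH h
    · exact Finset.mem_union_right _ h3

lemma Cinf_mono {θ : V → ℝ} {I I' : Finset V} (hI : I ⊆ I') :
    net.Cinf θ I ⊆ net.Cinf θ I' := by
  unfold Cinf
  generalize Fintype.card V = n
  induction n with
  | zero => exact Finset.Subset.refl _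
  | succ n IH =>
    rw [Function.iterate_succ_apply', Function.iterate_succ_apply']
    exact net.Cstep_mono hI IH

/-- Key deterministic characterization: for `v ∈ I`, `v ∉ N_s`,
`v` is eventually activated iff its threshold is below the total weight
from the final set of the process that excludes `v`. -/
lemma key_iff {θ : V → ℝ} {I : Finset V} {v : V} (hvI : v ∈ I) (hvN : v ∉ net.Nbr net.s) :
    v ∈ net.Cinf θ I ↔ θ v ≤ ∑ u ∈ net.Cinf θ (I.erase v), net.w u v := by
  set J := I.erase v with hJ
  set D := net.Cinf θ J with hD
  have hvJ : v ∉ J := Finset.notMem_erase v I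
  have hvD : v ∉ D := fun h => by
    rcases Finset.mem_union.mp (net.Cinf_subset_union θ J h) with h | h
    · exact hvN h
    · exact hvJ h
  constructor
  · intro hv
    by_contra hle
    push_neg at hle
    -- show the full process stays inside D and never contains v
    have main : ∀ n, (net.Cstep θ I)^[n] (net.Nbr net.s) ⊆ D := by
      intro n
      induction n with
      | zero => exact net.Nbr_subset_Cinf θ J
      | succ n IH =>
        rw [Function.iterate_succ_apply']
        intro u hu
        rw [net.mem_Cstep_iff] at hu
        rcases hu with h | ⟨h1, h2, h3⟩
        · exact IH h
        · have h2' : θ u ≤ ∑ x ∈ D, net.w x u := le_trans h2 (net.sum_w_mono IH u)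
          have huv : u ≠ v := by
            rintro rfl
            exact absurd h2' (not_le.mpr hle)
          by_cases hD' : u ∈ D
          · exact hD'
          · have : u ∈ net.Cstep θ J D := by
              rw [net.mem_Cstep_iff]
              exact Or.inr ⟨hD', h2', Finset.mem_erase.mpr ⟨huv, h3⟩⟩
            rwa [net.Cstep_Cinf θ J] at this
    exact hvD (main (Fintype.card V) hv)
  · intro hle
    set Cs := net.Cinf θ I with hCs
    have hDCs : D ⊆ Cs := by
      have main : ∀ n, (net.Cstep θ J)^[n] (net.Nbr net.s) ⊆ Cs := by
        intro n
        induction n with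
        | zero => exact net.Nbr_subset_Cinf θ I
        | succ n IH =>
          rw [Function.iterate_succ_apply']
          intro u hu
          rw [net.mem_Cstep_iff] at hu
          rcases hu with h | ⟨h1, h2, h3⟩
          · exact IH h
          · by_cases hC : u ∈ Cs
            · exact hC
            · have : u ∈ net.Cstep θ I Cs := by
                rw [net.mem_Cstep_iff]
                exact Or.inr ⟨hC, le_trans h2 (net.sum_w_mono IH u),
                  (Finset.mem_erase.mp h3).2⟩
              rwa [net.Cstep_Cinf θ I] at this
      exact main (Fintype.card V)
    by_contra hv
    have : v ∈ net.Cstep θ I Cs := by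
      rw [net.mem_Cstep_iff]
      exact Or.inr ⟨hv, le_trans hle (net.sum_w_mono hDCs v), hvI⟩
    rw [net.Cstep_Cinf θ I] at this
    exact hv this

end FriendNet
set_option linter.unusedSectionVars false

open MeasureTheory in
instance : IsProbabilityMeasure ((volume : Measure ℝ).restrict (Set.Icc (0:ℝ) 1)) :=
  ⟨by simp [Real.volume_Icc]⟩

open MeasureTheory in
instance : IsProbabilityMeasure (FriendNet.thetaMeasure V) := by
  unfold FriendNet.thetaMeasure
  infer_instance

namespace FriendNet

/-- Restriction of a threshold profile to the coordinates other than `v`. -/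
def restr (v : V) : (V → ℝ) → ({x : V // ¬ x = v} → ℝ) := fun θ x => θ x

/-- The σ-algebra generated by the coordinates other than `v`. -/
def Mv (v : V) : MeasurableSpace (V → ℝ) :=
  MeasurableSpace.comap (restr v) inferInstance

lemma measurable_restr (v : V) : Measurable (restr (V := V) v) :=
  measurable_pi_lambda _ fun x => measurable_pi_apply x.1

lemma Mv_le (v : V) {A : Set (V → ℝ)} (hA : MeasurableSet[Mv v] A) : MeasurableSet A := by
  obtain ⟨T, hT, rfl⟩ := hA
  exact measurable_restr v hT

lemma Mv_le_meas {u v : V} (huv : ¬ u = v) (a : ℝ) :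
    MeasurableSet[Mv v] {θ : V → ℝ | θ u ≤ a} :=
  ⟨{σ | σ ⟨u, huv⟩ ≤ a}, measurableSet_Iic.preimage (measurable_pi_apply _), rfl⟩

open Classical in
/-- The slice lemma: independence of the `v`-th coordinate from the others. -/
lemma slice (v : V) {A : Set (V → ℝ)} (hA : MeasurableSet[Mv v] A) {a : ℝ}
    (h0 : 0 ≤ a) (ha1 : a ≤ 1) :
    thetaMeasure V (A ∩ {θ | θ v ≤ a}) = ENNReal.ofReal a * thetaMeasure V A := by
  obtain ⟨T, hT, rfl⟩ := hA
  set p : V → Prop := fun x => x = v with hp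
  set e := MeasurableEquiv.piEquivPiSubtypeProd (fun _ : V => ℝ) p with he
  have mp := measurePreserving_piEquivPiSubtypeProd
      (fun _ : V => ((volume : Measure ℝ).restrict (Set.Icc (0:ℝ) 1))) p
  haveI : Unique (Subtype p) := ⟨⟨⟨v, rfl⟩⟩, fun i => Subtype.ext i.2⟩
  have hco : ∀ θ : V → ℝ, e θ = (fun x : Subtype p => θ x.1, fun x : {i // ¬ p i} => θ x.1) := by
    intro θ
    rfl
  have hprev1 : restr v ⁻¹' T = e ⁻¹' (Set.univ ×ˢ T) := by
    ext θ
    simp only [Set.mem_preimage, hco, Set.mem_prod, Set.mem_univ, true_and]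
    exact Iff.rfl
  have hprev2 : (restr v ⁻¹' T) ∩ {θ | θ v ≤ a}
      = e ⁻¹' ({α : Subtype p → ℝ | α ⟨v, rfl⟩ ≤ a} ×ˢ T) := by
    ext θ
    simp only [Set.mem_inter_iff, Set.mem_preimage, Set.mem_setOf_eq, hco, Set.mem_prod]
    exact and_comm
  have hfac : ∀ (inst : Fintype (Subtype p)),
      (@Measure.pi (Subtype p) (fun _ => ℝ) inst (fun _ => inferInstance)
        (fun _ => (volume : Measure ℝ).restrict (Set.Icc (0:ℝ) 1)))
        {α : Subtype p → ℝ | α ⟨v, rfl⟩ ≤ a} = ENNReal.ofReal a := by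
    intro inst
    have hs : {α : Subtype p → ℝ | α ⟨v, rfl⟩ ≤ a} = Set.univ.pi (fun _ => Set.Iic a) := by
      ext α
      simp only [Set.mem_setOf_eq, Set.mem_pi, Set.mem_univ, Set.mem_Iic, forall_const]
      constructor
      · intro h i
        have : i = ⟨v, rfl⟩ := Subtype.ext i.2
        rw [this]; exact h
      · intro h; exact h ⟨v, rfl⟩
    rw [hs, Measure.pi_pi, Finset.prod_const]
    have hcard : (Finset.univ : Finset (Subtype p)).card = 1 := by
      rw [Finset.card_univ, Fintype.card_unique]
    rw [hcard, pow_one, Measure.restrict_apply measurableSet_Iic]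
    have : Set.Iic a ∩ Set.Icc 0 1 = Set.Icc 0 a := by
      ext x
      simp only [Set.mem_inter_iff, Set.mem_Iic, Set.mem_Icc]
      constructor
      · rintro ⟨hx1, hx2, hx3⟩; exact ⟨hx2, hx1⟩
      · rintro ⟨hx1, hx2⟩; exact ⟨hx2, hx1, hx2.trans ha1⟩
    rw [this, Real.volume_Icc, sub_zero]
  have hθ : thetaMeasure V = Measure.pi fun _ : V =>
      (volume : Measure ℝ).restrict (Set.Icc (0:ℝ) 1) := rfl
  rw [hθ, hprev2, hprev1, mp.measure_preimage_equiv, mp.measure_preimage_equiv,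
    Measure.prod_prod, Measure.prod_prod]
  simp only [measure_univ, one_mul]
  rw [hfac _]

end FriendNet
namespace FriendNet

variable (net : FriendNet V)

open Classical in
/-- The path-sum score: the common value of both processes. -/
noncomputable def score (net : FriendNet V) : Finset V → V → ℝ := fun S v =>
  if v ∈ net.Nbr net.s then 1
  else if hv : v ∈ S then ∑ u : V, net.w u v * net.score (S.erase v) u
  else 0
termination_by S => S.card
decreasing_by exact Finset.card_erase_lt_of_mem hv

lemma score_of_Nbr {S : Finset V} {v : V} (h : v ∈ net.Nbr net.s) : net.score S v = 1 := by
  rw [score]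
  simp [h]

lemma score_of_not_mem {S : Finset V} {v : V} (hN : v ∉ net.Nbr net.s) (hS : v ∉ S) :
    net.score S v = 0 := by
  rw [score]
  simp [hN, hS]

lemma score_rec {S : Finset V} {v : V} (hN : v ∉ net.Nbr net.s) (hS : v ∈ S) :
    net.score S v = ∑ u : V, net.w u v * net.score (S.erase v) u := by
  rw [score]
  simp [hN, hS]

/-- The iterates of the process avoiding `v` are measurable w.r.t. the other coordinates. -/
lemma measurable_iter_eq (v : V) {J : Finset V} (hv : v ∉ J) (n : ℕ) (C : Finset V) :
    MeasurableSet[Mv v] {θ : V → ℝ | (net.Cstep θ J)^[n] (net.Nbr net.s) = C} := by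
  have hUniv : MeasurableSet[Mv v] (Set.univ : Set (V → ℝ)) := @MeasurableSet.univ _ (Mv v)
  have hEmpty : MeasurableSet[Mv v] (∅ : Set (V → ℝ)) := @MeasurableSet.empty _ (Mv v)
  induction n generalizing C with
  | zero =>
    by_cases h : net.Nbr net.s = C
    · convert hUniv using 1
      ext θ
      simp [h]
    · convert hEmpty using 1
      ext θ
      simp [h]
  | succ n IH =>
    have hrw : {θ : V → ℝ | (net.Cstep θ J)^[n+1] (net.Nbr net.s) = C}
        = ⋃ C' ∈ (Finset.univ : Finset (Finset V)),
            ({θ : V → ℝ | (net.Cstep θ J)^[n] (net.Nbr net.s) = C'}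
              ∩ {θ : V → ℝ | net.Cstep θ J ((net.Cstep θ J)^[n] (net.Nbr net.s)) = C}) := by
      ext θ
      simp only [Set.mem_setOf_eq, Set.mem_iUnion, Finset.mem_univ, Set.mem_inter_iff,
        exists_prop, true_and, Function.iterate_succ_apply']
      constructor
      · intro h
        exact ⟨_, rfl, h⟩
      · rintro ⟨C', h1, h2⟩
        exact h2
    rw [hrw]
    refine MeasurableSet.biUnion (Finset.univ : Finset (Finset V)).countable_toSet
      (fun C' _ => ?_)
    have hrw2 : {θ : V → ℝ | (net.Cstep θ J)^[n] (net.Nbr net.s) = C'}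
          ∩ {θ : V → ℝ | net.Cstep θ J ((net.Cstep θ J)^[n] (net.Nbr net.s)) = C}
        = {θ : V → ℝ | (net.Cstep θ J)^[n] (net.Nbr net.s) = C'}
          ∩ {θ : V → ℝ | net.Cstep θ J C' = C} := by
      ext θ
      simp only [Set.mem_inter_iff, Set.mem_setOf_eq]
      constructor
      · rintro ⟨h1, h2⟩
        rw [h1] at h2
        exact ⟨h1, h2⟩
      · rintro ⟨h1, h2⟩
        rw [← h1] at h2
        exact ⟨h1, h2⟩
    rw [hrw2]
    refine (IH C').inter ?_
    have hrw3 : {θ : V → ℝ | net.Cstep θ J C' = C}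
        = ⋂ u : V, {θ : V → ℝ | (u ∈ net.Cstep θ J C') ↔ u ∈ C} := by
      ext θ
      simp only [Set.mem_setOf_eq, Set.mem_iInter]
      exact ⟨fun h u => by rw [h], fun h => Finset.ext fun u => h u⟩
    rw [hrw3]
    refine MeasurableSet.iInter (fun u => ?_)
    have hmem : ∀ θ : V → ℝ, (u ∈ net.Cstep θ J C')
        ↔ (u ∈ C' ∨ (u ∉ C' ∧ θ u ≤ ∑ x ∈ C', net.w x u ∧ u ∈ J)) :=
      fun θ => net.mem_Cstep_iff
    by_cases hC' : u ∈ C'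
    · by_cases hC : u ∈ C
      · convert hUniv using 1; ext θ; simp [hmem, hC', hC]
      · convert hEmpty using 1; ext θ; simp [hmem, hC', hC]
    · by_cases hJ : u ∈ J
      · have huv : ¬ u = v := fun h => hv (h ▸ hJ)
        by_cases hC : u ∈ C
        · convert Mv_le_meas huv (∑ x ∈ C', net.w x u) using 1
          ext θ; simp [hmem, hC', hJ, hC]
        · convert (Mv_le_meas huv (∑ x ∈ C', net.w x u)).compl using 1
          ext θ; simp [hmem, hC', hJ, hC]
      · by_cases hC : u ∈ C
        · convert hEmpty using 1; ext θ; simp [hmem, hC', hJ, hC]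
        · convert hUniv using 1; ext θ; simp [hmem, hC', hJ, hC]

end FriendNet
namespace FriendNet

variable (net : FriendNet V)

open Classical in
lemma measure_Cinf_eq_score (I : Finset V) :
    ∀ v : V, (thetaMeasure V {θ : V → ℝ | v ∈ net.Cinf θ I}).toReal = net.score I v := by
  induction I using Finset.strongInduction with
  | H I IH =>
    intro v
    by_cases hN : v ∈ net.Nbr net.s
    · have hset : {θ : V → ℝ | v ∈ net.Cinf θ I} = Set.univ := by
        ext θ
        simp only [Set.mem_setOf_eq, Set.mem_univ, iff_true]
        exact net.Nbr_subset_Cinf θ I hN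
      rw [hset, measure_univ, ENNReal.toReal_one, net.score_of_Nbr hN]
    · by_cases hS : v ∈ I
      · -- the main case
        set J := I.erase v with hJdef
        have hvJ : v ∉ J := Finset.notMem_erase v I
        set A : Finset V → Set (V → ℝ) := fun C => {θ : V → ℝ | net.Cinf θ J = C} with hA
        have hAMv : ∀ C, MeasurableSet[Mv v] (A C) := fun C =>
          net.measurable_iter_eq v hvJ (Fintype.card V) C
        have hAmeas : ∀ C, MeasurableSet (A C) := fun C => Mv_le v (hAMv C)
        set a : Finset V → ℝ := fun C => ∑ u ∈ C, net.w u v with ha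
        have ha0 : ∀ C, 0 ≤ a C := fun C => net.sum_w_nonneg v
        have ha1 : ∀ C, a C ≤ 1 := fun C => net.sum_w_le_one v
        have hE : {θ : V → ℝ | v ∈ net.Cinf θ I}
            = ⋃ C ∈ (Finset.univ : Finset (Finset V)), (A C ∩ {θ : V → ℝ | θ v ≤ a C}) := by
          ext θ
          simp only [Set.mem_setOf_eq, Set.mem_iUnion, Finset.mem_univ, exists_prop, true_and,
            Set.mem_inter_iff, hA]
          rw [net.key_iff hS hN]
          constructor
          · intro h
            exact ⟨net.Cinf θ J, rfl, h⟩
          · rintro ⟨C, rfl, h⟩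
            exact h
        have hdisj : Set.PairwiseDisjoint
            (↑(Finset.univ : Finset (Finset V)))
            (fun C => A C ∩ {θ : V → ℝ | θ v ≤ a C}) := by
          intro C _ C' _ hne
          refine Set.disjoint_left.mpr ?_
          rintro θ ⟨h1, _⟩ ⟨h2, _⟩
          exact hne (h1.symm.trans h2)
        have hmeasv : ∀ C, MeasurableSet {θ : V → ℝ | θ v ≤ a C} := fun C =>
          measurableSet_Iic.preimage (measurable_pi_apply v)
        have hsum : thetaMeasure V {θ : V → ℝ | v ∈ net.Cinf θ I}
            = ∑ C : Finset V, ENNReal.ofReal (a C) * thetaMeasure V (A C) := by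
          rw [hE, measure_biUnion_finset hdisj (fun C _ => (hAmeas C).inter (hmeasv C))]
          exact Finset.sum_congr rfl fun C _ => slice v (hAMv C) (ha0 C) (ha1 C)
        have hsumR : (thetaMeasure V {θ : V → ℝ | v ∈ net.Cinf θ I}).toReal
            = ∑ C : Finset V, a C * (thetaMeasure V (A C)).toReal := by
          rw [hsum, ENNReal.toReal_sum (fun C _ => ?_)]
          · exact Finset.sum_congr rfl fun C _ => by
              rw [ENNReal.toReal_mul, ENNReal.toReal_ofReal (ha0 C)]
          · exact ENNReal.mul_ne_top ENNReal.ofReal_ne_top (measure_ne_top _ _)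
        -- the inner measures
        have hinner : ∀ u : V, (thetaMeasure V {θ : V → ℝ | u ∈ net.Cinf θ J}).toReal
            = ∑ C ∈ Finset.univ.filter (fun C : Finset V => u ∈ C),
                (thetaMeasure V (A C)).toReal := by
          intro u
          have hset : {θ : V → ℝ | u ∈ net.Cinf θ J}
              = ⋃ C ∈ Finset.univ.filter (fun C : Finset V => u ∈ C), A C := by
            ext θ
            simp only [Set.mem_setOf_eq, Set.mem_iUnion, Finset.mem_filter, Finset.mem_univ,
              true_and, exists_prop, hA]
            constructor
            · intro h
              exact ⟨net.Cinf θ J, h, rfl⟩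
            · rintro ⟨C, hC, rfl⟩
              exact hC
          have hdisj2 : Set.PairwiseDisjoint
              (↑(Finset.univ.filter (fun C : Finset V => u ∈ C))) A := by
            intro C _ C' _ hne
            refine Set.disjoint_left.mpr ?_
            rintro θ h1 h2
            have h1' : net.Cinf θ J = C := h1
            have h2' : net.Cinf θ J = C' := h2
            exact hne (h1'.symm.trans h2')
          rw [hset, measure_biUnion_finset hdisj2 (fun C _ => hAmeas C),
            ENNReal.toReal_sum (fun C _ => measure_ne_top _ _)]
        rw [hsumR, net.score_rec hN hS]
        have hIH : ∀ u : V, net.score J u = (thetaMeasure V {θ : V → ℝ | u ∈ net.Cinf θ J}).toReal :=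
          fun u => (IH J (Finset.erase_ssubset hS) u).symm
        calc ∑ C : Finset V, a C * (thetaMeasure V (A C)).toReal
            = ∑ C : Finset V, ∑ u ∈ C, net.w u v * (thetaMeasure V (A C)).toReal := by
              refine Finset.sum_congr rfl fun C _ => ?_
              rw [ha]
              rw [Finset.sum_mul]
          _ = ∑ C : Finset V, ∑ u : V,
                if u ∈ C then net.w u v * (thetaMeasure V (A C)).toReal else 0 := by
              refine Finset.sum_congr rfl fun C _ => ?_
              rw [Finset.sum_ite_mem, Finset.univ_inter]
          _ = ∑ u : V, ∑ C : Finset V,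
                if u ∈ C then net.w u v * (thetaMeasure V (A C)).toReal else 0 :=
              Finset.sum_comm
          _ = ∑ u : V, net.w u v * ∑ C ∈ Finset.univ.filter (fun C : Finset V => u ∈ C),
                (thetaMeasure V (A C)).toReal := by
              refine Finset.sum_congr rfl fun u _ => ?_
              rw [Finset.sum_filter, Finset.mul_sum]
              refine Finset.sum_congr rfl fun C _ => ?_
              by_cases h : u ∈ C <;> simp [h]
          _ = ∑ u : V, net.w u v * net.score J u := by
              refine Finset.sum_congr rfl fun u _ => ?_
              rw [hIH u, hinner u]
      · have hset : {θ : V → ℝ | v ∈ net.Cinf θ I} = ∅ := by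
          ext θ
          simp only [Set.mem_setOf_eq, Set.mem_empty_iff_false, iff_false]
          intro h
          rcases Finset.mem_union.mp (net.Cinf_subset_union θ I h) with h | h
          · exact hN h
          · exact hS h
        rw [hset, measure_empty, ENNReal.toReal_zero, net.score_of_not_mem hN hS]

end FriendNet
namespace FriendNet

variable (net : FriendNet V)

/-- Weight of a single choice of a user. -/
noncomputable def cw (v : V) : Option V → ℝ :=
  fun o => o.elim (1 - ∑ u : V, net.w u v) (fun u => net.w u v)

lemma realWeight_eq (g : V → Option V) : net.realWeight g = ∏ v : V, net.cw v (g v) := rfl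

lemma sum_cw (v : V) : ∑ o : Option V, net.cw v o = 1 := by
  rw [Fintype.sum_option]
  simp [cw]

lemma sum_realWeight : ∑ g : V → Option V, net.realWeight g = 1 := by
  have h := Finset.prod_univ_sum (fun _ : V => (Finset.univ : Finset (Option V)))
      (fun v o => net.cw v o)
  rw [Fintype.piFinset_univ] at h
  calc ∑ g : V → Option V, net.realWeight g
      = ∑ g : V → Option V, ∏ v : V, net.cw v (g v) := rfl
    _ = ∏ v : V, ∑ o : Option V, net.cw v o := h.symm
    _ = ∏ v : V, (1:ℝ) := Finset.prod_congr rfl fun v _ => net.sum_cw v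
    _ = 1 := Finset.prod_const_one

open Classical in
lemma cond_update (v u : V) (X : (V → Option V) → ℝ)
    (hX : ∀ (g : V → Option V) (o : Option V), X (Function.update g v o) = X g) :
    ∑ g : V → Option V, net.realWeight g * ((if g v = some u then (1:ℝ) else 0) * X g)
      = net.w u v * ∑ g : V → Option V, net.realWeight g * X g := by
  set K : Option V → ℝ := fun o =>
    ∑ g ∈ Finset.univ.filter (fun g : V → Option V => g v = o),
      (∏ x ∈ Finset.univ.erase v, net.cw x (g x)) * X g with hK
  have hKconst : ∀ o o' : Option V, K o = K o' := by
    intro o o'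
    rw [hK]
    refine Finset.sum_bij' (fun g _ => Function.update g v o')
      (fun g _ => Function.update g v o) ?_ ?_ ?_ ?_ ?_
    · intro g hg
      simp [Function.update_self]
    · intro g hg
      simp [Function.update_self]
    · intro g hg
      have hgv : g v = o := (Finset.mem_filter.mp hg).2
      rw [Function.update_idem, ← hgv, Function.update_eq_self]
    · intro g hg
      have hgv : g v = o' := (Finset.mem_filter.mp hg).2
      rw [Function.update_idem, ← hgv, Function.update_eq_self]
    · intro g hg
      have hprod : ∏ x ∈ Finset.univ.erase v, net.cw x (Function.update g v o' x)
          = ∏ x ∈ Finset.univ.erase v, net.cw x (g x) :=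
        Finset.prod_congr rfl fun x hx => by
          rw [Function.update_of_ne (Finset.ne_of_mem_erase hx)]
      rw [hprod, hX]
  have hfib : ∀ Y : (V → Option V) → ℝ,
      ∑ g : V → Option V, net.realWeight g * Y g
        = ∑ o : Option V, net.cw v o *
            ∑ g ∈ Finset.univ.filter (fun g : V → Option V => g v = o),
              (∏ x ∈ Finset.univ.erase v, net.cw x (g x)) * Y g := by
    intro Y
    rw [← Finset.sum_fiberwise Finset.univ (fun g : V → Option V => g v)
      (fun g => net.realWeight g * Y g)]
    refine Finset.sum_congr rfl fun o _ => ?_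
    rw [Finset.mul_sum]
    refine Finset.sum_congr rfl fun g hg => ?_
    have hgv : g v = o := (Finset.mem_filter.mp hg).2
    rw [net.realWeight_eq, ← Finset.mul_prod_erase Finset.univ _ (Finset.mem_univ v), hgv]
    ring
  have hL : ∑ g : V → Option V, net.realWeight g * ((if g v = some u then (1:ℝ) else 0) * X g)
      = net.cw v (some u) * K (some u) := by
    rw [hfib]
    rw [Finset.sum_eq_single (some u)]
    · congr 1
      rw [hK]
      refine Finset.sum_congr rfl fun g hg => ?_
      have hgv : g v = some u := (Finset.mem_filter.mp hg).2
      rw [hgv]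
      simp
    · intro o _ ho
      have : ∑ g ∈ Finset.univ.filter (fun g : V → Option V => g v = o),
          (∏ x ∈ Finset.univ.erase v, net.cw x (g x))
            * ((if g v = some u then (1:ℝ) else 0) * X g) = 0 := by
        refine Finset.sum_eq_zero fun g hg => ?_
        have hgv : g v = o := (Finset.mem_filter.mp hg).2
        rw [hgv, if_neg ho]
        ring
      rw [this, mul_zero]
    · intro h
      exact absurd (Finset.mem_univ _) h
  have hR : ∑ g : V → Option V, net.realWeight g * X g = K (some u) := by
    rw [hfib]
    have hKo : ∀ o : Option V,
        (∑ g ∈ Finset.univ.filter (fun g : V → Option V => g v = o),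
          (∏ x ∈ Finset.univ.erase v, net.cw x (g x)) * X g) = K (some u) := fun o =>
      hKconst o (some u)
    rw [Finset.sum_congr rfl fun o _ => by rw [hKo o], ← Finset.sum_mul, net.sum_cw, one_mul]
  rw [hL, hR]
  rfl

end FriendNet

/-- Process 2 reachability with fuel: can the chain from `v` (restricted to fresh
vertices in `S`) reach `Ns`? -/
def ReachAux (g : V → Option V) (Ns : Finset V) : ℕ → Finset V → V → Bool
  | 0, _, _ => false
  | m + 1, S, v =>
    match g v with
    | none => false
    | some u => decide (u ∈ Ns) || (decide (u ∈ S.erase v) && ReachAux g Ns m (S.erase v) u)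

lemma reachAux_congr (Ns : Finset V) :
    ∀ (m : ℕ) (S : Finset V) (v : V) (g g' : V → Option V), v ∈ S →
      (∀ x ∈ S, g x = g' x) → ReachAux g Ns m S v = ReachAux g' Ns m S v := by
  intro m
  induction m with
  | zero => intros; rfl
  | succ m IH =>
    intro S v g g' hv hgg
    cases hgv : g v with
    | none =>
      have hg'v : g' v = none := ((hgg v hv).symm).trans hgv
      simp [ReachAux, hgv, hg'v]
    | some u =>
      have hg'v : g' v = some u := ((hgg v hv).symm).trans hgv
      simp only [ReachAux, hgv, hg'v]
      by_cases hu : u ∈ S.erase v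
      · rw [IH (S.erase v) u g g' hu (fun x hx => hgg x (Finset.mem_of_mem_erase hx))]
      · simp [hu]

namespace FriendNet

variable (net : FriendNet V)

open Classical in
lemma sum_reach (S : Finset V) :
    ∀ (v : V) (m : ℕ), v ∈ S → v ∉ net.Nbr net.s → S.card ≤ m →
      ∑ g : V → Option V,
        net.realWeight g * (if ReachAux g (net.Nbr net.s) m S v then (1:ℝ) else 0)
          = net.score S v := by
  induction S using Finset.strongInduction with
  | H S IH =>
    intro v m hvS hvN hm
    obtain ⟨m, rfl⟩ : ∃ m', m = m' + 1 := by
      have := Finset.card_pos.mpr ⟨v, hvS⟩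
      exact ⟨m - 1, by omega⟩
    set Ns := net.Nbr net.s with hNs
    have hpoint : ∀ g : V → Option V,
        (if ReachAux g Ns (m+1) S v then (1:ℝ) else 0)
          = ∑ u : V, (if g v = some u then (1:ℝ) else 0) *
              (if (u ∈ Ns ∨ (u ∈ S.erase v ∧ ReachAux g Ns m (S.erase v) u = true))
                then (1:ℝ) else 0) := by
      intro g
      cases hgv : g v with
      | none =>
        simp [ReachAux, hgv]
      | some u₀ =>
        have h1 : ∀ u : V, ((g v = some u) ↔ (u = u₀)) := by
          intro u
          rw [hgv]
          constructor
          · intro h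
            exact (Option.some_injective V h).symm
          · rintro rfl
            rfl
        simp only [h1, ite_mul, one_mul, zero_mul, Finset.sum_ite_eq' Finset.univ u₀,
          Finset.mem_univ, if_true]
        simp [ReachAux, hgv, Bool.or_eq_true, Bool.and_eq_true, decide_eq_true_eq]
    calc ∑ g : V → Option V,
          net.realWeight g * (if ReachAux g Ns (m+1) S v then (1:ℝ) else 0)
        = ∑ g : V → Option V, ∑ u : V,
            net.realWeight g * ((if g v = some u then (1:ℝ) else 0) *
              (if (u ∈ Ns ∨ (u ∈ S.erase v ∧ ReachAux g Ns m (S.erase v) u = true))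
                then (1:ℝ) else 0)) := by
          refine Finset.sum_congr rfl fun g _ => ?_
          rw [hpoint g, Finset.mul_sum]
      _ = ∑ u : V, ∑ g : V → Option V,
            net.realWeight g * ((if g v = some u then (1:ℝ) else 0) *
              (if (u ∈ Ns ∨ (u ∈ S.erase v ∧ ReachAux g Ns m (S.erase v) u = true))
                then (1:ℝ) else 0)) := Finset.sum_comm
      _ = ∑ u : V, net.w u v * ∑ g : V → Option V, net.realWeight g *
            (if (u ∈ Ns ∨ (u ∈ S.erase v ∧ ReachAux g Ns m (S.erase v) u = true))
              then (1:ℝ) else 0) := by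
          refine Finset.sum_congr rfl fun u _ => ?_
          refine net.cond_update v u _ (fun g o => ?_)
          by_cases h1 : u ∈ Ns
          · simp [h1]
          · by_cases h2 : u ∈ S.erase v
            · have : ReachAux (Function.update g v o) Ns m (S.erase v) u
                  = ReachAux g Ns m (S.erase v) u := by
                refine reachAux_congr Ns m (S.erase v) u _ _ h2 (fun x hx => ?_)
                exact Function.update_of_ne (Finset.ne_of_mem_erase hx) o g
              rw [this]
            · simp [h1, h2]
      _ = ∑ u : V, net.w u v * net.score (S.erase v) u := by
          refine Finset.sum_congr rfl fun u _ => ?_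
          congr 1
          by_cases h1 : u ∈ Ns
          · simp only [h1, true_or, if_true, mul_one]
            rw [net.sum_realWeight, net.score_of_Nbr h1]
          · by_cases h2 : u ∈ S.erase v
            · have hcard : (S.erase v).card ≤ m := by
                rw [Finset.card_erase_of_mem hvS]
                omega
              have := IH (S.erase v) (Finset.erase_ssubset hvS) u m h2 h1 hcard
              rw [← this]
              refine Finset.sum_congr rfl fun g _ => ?_
              congr 1
              simp [h1, h2]
            · simp only [h1, h2, false_and, or_self, if_false, mul_zero]
              rw [net.score_of_not_mem h1 h2, Finset.sum_const_zero]
      _ = net.score S v := (net.score_rec hvN hvS).symm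

end FriendNet
namespace FriendNet

variable (net : FriendNet V)

lemma trace_iff_reach (g : V → Option V) :
    ∀ (m : ℕ) (A : Finset V) (u : V), u ∈ A → (∀ x ∈ A, x ∉ net.Nbr net.s) →
      Fintype.card V + 1 ≤ m + A.card →
      (((none : Option V) ∉ traceAux g (net.Nbr net.s) m u (A.image some))
        ↔ ReachAux g (net.Nbr net.s) m (insert u (Finset.univ \ A)) u = true) := by
  intro m
  induction m with
  | zero =>
    intro A u huA hA hm
    exfalso
    have := Finset.card_le_univ A
    omega
  | succ m IH =>
    intro A u huA hA hm
    have hSer : (insert u (Finset.univ \ A)).erase u = Finset.univ \ A := by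
      refine Finset.erase_insert ?_
      simp [huA]
    cases hgu : g u with
    | none =>
      simp [traceAux, ReachAux, hgu]
    | some x =>
      by_cases hxA : x ∈ A
      · have hxNs : x ∉ net.Nbr net.s := hA x hxA
        have hxacc : some x ∈ A.image some := Finset.mem_image_of_mem some hxA
        have hxS : x ∉ Finset.univ \ A := by simp [hxA]
        simp [traceAux, ReachAux, hgu, hxacc, hxNs, hSer, hxS]
      · have hxacc : some x ∉ A.image some := by simp [hxA]
        by_cases hxNs : x ∈ net.Nbr net.s
        · have hnone : (none : Option V) ∉ A.image some := by
            intro h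
            rcases Finset.mem_image.mp h with ⟨y, _, hy⟩
            exact Option.some_ne_none y hy
          simp [traceAux, ReachAux, hgu, hxacc, hxNs, hnone]
        · have hxS : x ∈ Finset.univ \ A := by simp [hxA]
          have hins : insert x (Finset.univ \ insert x A) = Finset.univ \ A := by
            ext y
            by_cases hyx : y = x
            · subst hyx
              simp [hxA]
            · simp [Finset.mem_insert, Finset.mem_sdiff, hyx]
          have key := IH (insert x A) x (Finset.mem_insert_self x A)
            (by
              intro y hy
              rcases Finset.mem_insert.mp hy with rfl | hy
              · exact hxNs
              · exact hA y hy)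
            (by
              rw [Finset.card_insert_of_notMem hxA]
              omega)
          rw [hins] at key
          have hstep : traceAux g (net.Nbr net.s) (m+1) u (A.image some)
              = traceAux g (net.Nbr net.s) m x ((insert x A).image some) := by
            rw [Finset.image_insert]
            simp [traceAux, hgu, hxacc, hxNs]
          have hstep2 : ReachAux g (net.Nbr net.s) (m+1) (insert u (Finset.univ \ A)) u
              = ReachAux g (net.Nbr net.s) m (Finset.univ \ A) x := by
            simp only [ReachAux, hgu, hSer]
            simp [hxNs, hxS]
          rw [hstep, hstep2, ← key]
  
end FriendNet

/-- Corollary 2: the probability that a random realization `ĝ` is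
type-1 (i.e. `E[y(ĝ)]`) equals `f(V)`, which in turn equals `p_max`. -/
theorem expected_type_eq_pmax (net : FriendNet V) :
    (∑ g : V → Option V,
        net.realWeight g * (if (none : Option V) ∉ net.trace g then (1 : ℝ) else 0))
      = net.f Finset.univ ∧
    net.f Finset.univ = net.pmax := by
  constructor
  · have h1 : ∀ g : V → Option V, ((none : Option V) ∉ net.trace g
        ↔ ReachAux g (net.Nbr net.s) (Fintype.card V + 1) Finset.univ net.t = true) := by
      intro g
      have h := net.trace_iff_reach g (Fintype.card V + 1) {net.t} net.t
        (Finset.mem_singleton_self net.t)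
        (by
          intro x hx
          rw [Finset.mem_singleton] at hx
          subst hx
          exact net.t_not_mem_Nbr)
        (by simp)
      rw [Finset.image_singleton] at h
      have huniv : insert net.t (Finset.univ \ {net.t}) = Finset.univ := by
        ext y
        by_cases hyt : y = net.t <;> simp [hyt]
      rw [huniv] at h
      exact h
    have h2 : ∑ g : V → Option V,
        net.realWeight g * (if (none : Option V) ∉ net.trace g then (1 : ℝ) else 0)
        = ∑ g : V → Option V, net.realWeight g *
            (if ReachAux g (net.Nbr net.s) (Fintype.card V + 1) Finset.univ net.t then (1:ℝ) else 0) := by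
      refine Finset.sum_congr rfl fun g _ => ?_
      congr 1
      by_cases h : (none : Option V) ∉ net.trace g
      · rw [if_pos h, if_pos ((h1 g).mp h)]
      · rw [if_neg h, if_neg (fun hh => h ((h1 g).mpr hh))]
    rw [h2, net.sum_reach Finset.univ net.t (Fintype.card V + 1) (Finset.mem_univ _)
      net.t_not_mem_Nbr (by rw [Finset.card_univ]; omega)]
    exact (net.measure_Cinf_eq_score Finset.univ net.t).symm
  · have hmono : ∀ I : Finset V, net.f I ≤ net.f Finset.univ := by
      intro I
      refine ENNReal.toReal_mono (measure_ne_top _ _) ?_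
      refine measure_mono fun θ hθ => ?_
      exact net.Cinf_mono (Finset.subset_univ I) hθ
    refine le_antisymm ?_ ?_
    · exact le_ciSup (Set.Finite.bddAbove (Set.finite_range _)) Finset.univ
    · exact ciSup_le hmono
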